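/- Every 3-connected graph that is not bipartite contains an induced odd cycle C such that the graph obtained by deleting the vertices of C is connected. -/

import Mathlib

open SimpleGraph

/-- `G` is `k`-connected: more than `k` vertices, and deleting any set of fewer than
`k` vertices leaves a connected graph. -/
def KConnected {V : Type*} (G : SimpleGraph V) (k : ℕ) : Prop :=
  k < Nat.card V ∧ ∀ S : Set V, S.Finite → S.ncard < k → (G.induce Sᶜ).Connected

/-- `G + xy`: the graph `G` with the edge `xy` added (equal to `G` if already present). -/
def AddEdge {V : Type*} (G : SimpleGraph V) (x y : V) : SimpleGraph V :=
  G ⊔ SimpleGraph.fromEdgeSet {s(x, y)}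

/-- `G` has a cycle of length `n`. -/
def HasCycleLength {V : Type*} (G : SimpleGraph V) (n : ℕ) : Prop :=
  ∃ (v : V) (c : G.Walk v v), c.IsCycle ∧ c.length = n

/-- `G` contains `k` cycles of consecutive lengths. -/
def HasConsecCycles {V : Type*} (G : SimpleGraph V) (k : ℕ) : Prop :=
  ∃ m : ℕ, ∀ i < k, HasCycleLength G (m + i)

namespace NSOC

variable {V : Type*} {G : SimpleGraph V}

@[simp] lemma getVert_nil {u : V} (k : ℕ) : (Walk.nil : G.Walk u u).getVert k = u :=
  Walk.getVert_of_length_le _ (by simp)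

/-- Take the first `n` darts of a walk. -/
def tk {u v : V} : (w : G.Walk u v) → (n : ℕ) → G.Walk u (w.getVert n)
  | w, 0 => (Walk.nil : G.Walk u u).copy rfl (w.getVert_zero).symm
  | Walk.nil, _ + 1 => Walk.nil
  | Walk.cons h q, n + 1 => Walk.cons h (tk q n)

/-- Drop the first `n` darts of a walk. -/
def dp {u v : V} : (w : G.Walk u v) → (n : ℕ) → G.Walk (w.getVert n) v
  | w, 0 => w.copy (w.getVert_zero).symm rfl
  | Walk.nil, _ + 1 => Walk.nil
  | Walk.cons _ q, n + 1 => dp q n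

@[simp] lemma length_tk {u v : V} (w : G.Walk u v) (n : ℕ) :
    (tk w n).length = min n w.length := by
  induction w generalizing n with
  | nil => cases n <;> simp [tk]
  | cons h q ih =>
      cases n with
      | zero => simp [tk]
      | succ n => simp [tk, ih, Nat.succ_min_succ]

@[simp] lemma length_dp {u v : V} (w : G.Walk u v) (n : ℕ) :
    (dp w n).length = w.length - n := by
  induction w generalizing n with
  | nil => cases n <;> simp [dp]
  | cons h q ih =>
      cases n with
      | zero => simp [dp]
      | succ n => simpa [dp] using ih n

lemma getVert_tk {u v : V} (w : G.Walk u v) (n k : ℕ) :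
    (tk w n).getVert k = w.getVert (min k n) := by
  induction w generalizing n k with
  | nil => cases n <;> simp [tk]
  | cons h q ih =>
      cases n with
      | zero => simp [tk]
      | succ n =>
          cases k with
          | zero => simp [tk]
          | succ k =>
              simp only [tk, Walk.getVert_cons_succ, ih, Nat.succ_min_succ]

lemma getVert_dp {u v : V} (w : G.Walk u v) (n k : ℕ) :
    (dp w n).getVert k = w.getVert (n + k) := by
  induction w generalizing n k with
  | nil => cases n <;> simp [dp]
  | cons h q ih =>
      cases n with
      | zero => simp [dp]
      | succ n => simpa [dp, Nat.succ_add] using ih n k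

lemma support_eq_map_getVert {u v : V} (w : G.Walk u v) :
    w.support = (List.range (w.length + 1)).map w.getVert := by
  induction w with
  | nil => simp [List.range_succ]
  | cons h q ih =>
      rw [Walk.length_cons, List.range_succ_eq_map, List.map_cons, List.map_map,
        Walk.getVert_zero, show ((Walk.cons h q).getVert ∘ Nat.succ) = q.getVert from rfl,
        ← ih, Walk.support_cons]

lemma edges_eq_map_getVert {u v : V} (w : G.Walk u v) :
    w.edges = (List.range w.length).map (fun i => s(w.getVert i, w.getVert (i + 1))) := by
  induction w with
  | nil => simp
  | cons h q ih =>
      rw [Walk.length_cons, List.range_succ_eq_map, List.map_cons, List.map_map,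
        show ((fun i => s((Walk.cons h q).getVert i, (Walk.cons h q).getVert (i + 1)))
          ∘ Nat.succ) = (fun i => s(q.getVert i, q.getVert (i + 1))) from rfl, ← ih,
        Walk.edges_cons]
      simp [Walk.getVert_cons_succ]

lemma mem_support_iff_getVert {u v x : V} {w : G.Walk u v} :
    x ∈ w.support ↔ ∃ k, k ≤ w.length ∧ w.getVert k = x := by
  rw [Walk.mem_support_iff_exists_getVert]
  tauto

lemma edge_mem_of_lt {u v : V} (w : G.Walk u v) {i : ℕ} (hi : i < w.length) :
    s(w.getVert i, w.getVert (i + 1)) ∈ w.edges := by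
  rw [edges_eq_map_getVert]
  exact List.mem_map_of_mem (List.mem_range.mpr hi)

lemma exists_idx_of_edge_mem {u v : V} {w : G.Walk u v} {e : Sym2 V} (he : e ∈ w.edges) :
    ∃ i, i < w.length ∧ e = s(w.getVert i, w.getVert (i + 1)) := by
  rw [edges_eq_map_getVert] at he
  obtain ⟨i, hi, rfl⟩ := List.mem_map.mp he
  exact ⟨i, List.mem_range.mp hi, rfl⟩

/-- Chordless condition for a walk. -/
def Chordless {u : V} (c : G.Walk u u) : Prop :=
  ∀ a b : V, a ∈ c.support → b ∈ c.support → G.Adj a b → s(a, b) ∈ c.edges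

/-- A good cycle: induced (chordless) odd cycle. -/
def Good {u : V} (c : G.Walk u u) : Prop :=
  c.IsCycle ∧ Odd c.length ∧ Chordless c

lemma odd_split {a b : ℕ} (h : Odd (a + b)) : Odd a ∨ Odd b := by
  rcases Nat.even_or_odd a with ha | ha
  · right; rcases Nat.even_or_odd b with hb | hb
    · exfalso; rw [Nat.odd_iff, Nat.even_iff] at *; omega
    · exact hb
  · left; exact ha

/-- Core lemma: a graph with an odd closed walk has an induced odd cycle. -/
theorem core {W : Type*} {H : SimpleGraph W} :
    ∀ (n : ℕ) {u : W} (w : H.Walk u u), w.length = n → Odd n →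
    ∃ (v : W) (c : H.Walk v v), Good c := by
  intro n
  induction n using Nat.strong_induction_on with
  | _ n ih =>
  intro u w hlen hodd
  subst hlen
  set ℓ := w.length with hℓ
  have hne1 : w.length ≠ 1 := by
    intro h1
    have := w.adj_getVert_succ (by omega : 0 < w.length)
    rw [w.getVert_zero, show (0+1 : ℕ) = w.length from by omega, w.getVert_length] at this
    exact H.irrefl this
  have hmod : w.length % 2 = 1 := Nat.odd_iff.mp hodd
  have hl3 : 3 ≤ w.length := by omega
  by_cases hrep : ∃ i j, i < j ∧ j ≤ w.length ∧ ¬(i = 0 ∧ j = w.length) ∧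
      w.getVert i = w.getVert j
  · obtain ⟨i, j, hij, hjl, hne, heq⟩ := hrep
    have e1 : (dp w i).getVert (j - i) = w.getVert j := by
      rw [getVert_dp]; congr 1; omega
    set A : H.Walk (w.getVert i) (w.getVert i) :=
      (tk (dp w i) (j - i)).copy rfl (e1.trans heq.symm) with hA
    set B : H.Walk u u := (tk w i).append ((dp w j).copy heq.symm rfl) with hB
    have hlenA : A.length = j - i := by
      rw [hA, Walk.length_copy, length_tk, length_dp]; omega
    have hlenB : B.length = i + (w.length - j) := by
      rw [hB, Walk.length_append, Walk.length_copy, length_tk, length_dp]; omega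
    have hsum : A.length + B.length = w.length := by omega
    rcases odd_split (by rw [hsum]; exact hodd) with hoA | hoB
    · exact ih A.length (by omega) A rfl hoA
    · have hBlt : B.length < w.length := by
        rcases Nat.eq_or_lt_of_le (show B.length ≤ w.length by omega) with he | h
        · exfalso; apply hne; constructor <;> omega
        · exact h
      exact ih B.length hBlt B rfl hoB
  · push_neg at hrep
    have hinj : ∀ i j, i ≤ w.length → j ≤ w.length → w.getVert i = w.getVert j →
        i = j ∨ (i = 0 ∧ j = w.length) ∨ (i = w.length ∧ j = 0) := by
      intro i j hi hj heq
      rcases Nat.lt_trichotomy i j with h | h | h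
      · by_cases hc : i = 0 ∧ j = w.length
        · exact Or.inr (Or.inl hc)
        · exact absurd heq (hrep i j h hj (by tauto))
      · exact Or.inl h
      · by_cases hc : j = 0 ∧ i = w.length
        · exact Or.inr (Or.inr ⟨hc.2, hc.1⟩)
        · exact absurd heq.symm (hrep j i h hi (by tauto))
    by_cases hchord : ∃ i j, i < j ∧ j < w.length ∧ H.Adj (w.getVert i) (w.getVert j) ∧
        s(w.getVert i, w.getVert j) ∉ w.edges
    · obtain ⟨i, j, hij, hjl, hadj, hnedge⟩ := hchord
      have hji2 : i + 2 ≤ j := by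
        by_contra hc
        have hj1 : j = i + 1 := by omega
        exact hnedge (by rw [hj1]; exact edge_mem_of_lt w (by omega))
      have hne0 : ¬(i = 0 ∧ j = w.length - 1) := by
        rintro ⟨rfl, rfl⟩
        apply hnedge
        have h0 : w.getVert w.length = w.getVert 0 := by
          rw [w.getVert_length, w.getVert_zero]
        have := edge_mem_of_lt w (show w.length - 1 < w.length by omega)
        rw [show w.length - 1 + 1 = w.length from by omega, h0] at this
        rwa [Sym2.eq_swap]
      have e1 : (dp w i).getVert (j - i) = w.getVert j := by
        rw [getVert_dp]; congr 1; omega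
      set A : H.Walk (w.getVert i) (w.getVert i) :=
        ((tk (dp w i) (j - i)).copy rfl e1).append (Walk.cons hadj.symm Walk.nil) with hA
      set B : H.Walk u u := (tk w i).append (Walk.cons hadj (dp w j)) with hB
      have hlenA : A.length = j - i + 1 := by
        rw [hA, Walk.length_append, Walk.length_copy, length_tk, length_dp]; simp; omega
      have hlenB : B.length = i + (1 + (w.length - j)) := by
        rw [hB, Walk.length_append, Walk.length_cons, length_tk, length_dp]; omega
      have hsum : A.length + B.length = w.length + 2 := by omega
      rcases odd_split (a := A.length) (b := B.length)
          (by rw [hsum]; rcases hodd with ⟨m, hm⟩; exact ⟨m + 1, by omega⟩) with hoA | hoB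
      · exact ih A.length (by omega) A rfl hoA
      · exact ih B.length (by omega) B rfl hoB
    · push_neg at hchord
      refine ⟨u, w, ?_, hodd, ?_⟩
      · refine ⟨⟨⟨?_⟩, ?_⟩, ?_⟩
        · -- edges nodup
          rw [edges_eq_map_getVert]
          refine List.Nodup.map_on ?_ List.nodup_range
          intro x hx y hy hxy
          rw [List.mem_range] at hx hy
          rw [Sym2.eq_iff] at hxy
          rcases hxy with ⟨h1, h2⟩ | ⟨h1, h2⟩
          · rcases hinj x y (by omega) (by omega) h1 with h | h | h <;> omega
          · rcases hinj x (y + 1) (by omega) (by omega) h1 with h | h | h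
            · rcases hinj (x + 1) y (by omega) (by omega) h2 with h' | h' | h' <;> omega
            · rcases hinj (x + 1) y (by omega) (by omega) h2 with h' | h' | h' <;> omega
            · omega
        · intro hnil
          rw [hnil] at hl3; simp at hl3
        · -- support tail nodup
          rw [support_eq_map_getVert, List.range_succ_eq_map, List.map_cons, List.tail_cons,
            List.map_map]
          refine List.Nodup.map_on ?_ List.nodup_range
          intro x hx y hy hxy
          rw [List.mem_range] at hx hy
          rcases hinj (x + 1) (y + 1) (by omega) (by omega) hxy with h | h | h <;> omega
      · -- chordless
        intro a b ha hb hadj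
        by_contra hnedge
        obtain ⟨i0, hi0, hia⟩ := mem_support_iff_getVert.mp ha
        obtain ⟨j0, hj0, hjb⟩ := mem_support_iff_getVert.mp hb
        set i' := if i0 = w.length then 0 else i0 with hi'
        set j' := if j0 = w.length then 0 else j0 with hj'
        have hia' : w.getVert i' = a := by
          rw [hi']; split
          · rw [w.getVert_zero, ← w.getVert_length]; subst hia; congr 1; omega
          · exact hia
        have hjb' : w.getVert j' = b := by
          rw [hj']; split
          · rw [w.getVert_zero, ← w.getVert_length]; subst hjb; congr 1; omega
          · exact hjb
        have hi'l : i' < w.length := by rw [hi']; split <;> omega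
        have hj'l : j' < w.length := by rw [hj']; split <;> omega
        have hne' : i' ≠ j' := by
          intro hE
          have hab : a = b := by rw [← hia', ← hjb', hE]
          exact H.irrefl (hab ▸ hadj)
        rcases Nat.lt_or_ge i' j' with hlt | hge
        · apply hnedge
          have := hchord i' j' hlt hj'l (by rw [hia', hjb']; exact hadj)
          rwa [hia', hjb'] at this
        · have hlt : j' < i' := by omega
          apply hnedge
          have := hchord j' i' hlt hi'l (by rw [hia', hjb']; exact hadj.symm)
          rw [hia', hjb'] at this
          rwa [Sym2.eq_swap] at this

/-- Connectivity within a vertex set `S`. -/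
def Conn (G : SimpleGraph V) (S : Set V) (a b : V) : Prop :=
  ∃ w : G.Walk a b, ∀ x ∈ w.support, x ∈ S

lemma Conn.mem_left {S : Set V} {a b : V} (h : Conn G S a b) : a ∈ S := by
  obtain ⟨w, hw⟩ := h; exact hw a w.start_mem_support

lemma Conn.mem_right {S : Set V} {a b : V} (h : Conn G S a b) : b ∈ S := by
  obtain ⟨w, hw⟩ := h; exact hw b w.end_mem_support

lemma Conn.refl {S : Set V} {a : V} (h : a ∈ S) : Conn G S a a :=
  ⟨Walk.nil, by simpa⟩

lemma Conn.symm {S : Set V} {a b : V} (h : Conn G S a b) : Conn G S b a := by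
  obtain ⟨w, hw⟩ := h
  exact ⟨w.reverse, by intro x hx; rw [Walk.support_reverse] at hx
                       exact hw x (List.mem_reverse.mp hx)⟩

lemma Conn.trans {S : Set V} {a b c : V} (h1 : Conn G S a b) (h2 : Conn G S b c) :
    Conn G S a c := by
  obtain ⟨w1, hw1⟩ := h1; obtain ⟨w2, hw2⟩ := h2
  refine ⟨w1.append w2, ?_⟩
  intro x hx
  rcases (Walk.mem_support_append_iff w1 w2).mp hx with h | h
  · exact hw1 x h
  · exact hw2 x h

lemma Conn.adj_extend {S : Set V} {a b c : V} (h : Conn G S a b) (hadj : G.Adj b c)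
    (hc : c ∈ S) : Conn G S a c := by
  refine h.trans ⟨Walk.cons hadj Walk.nil, ?_⟩
  intro x hx
  simp only [Walk.support_cons, Walk.support_nil, List.mem_cons, List.mem_singleton] at hx
  rcases hx with rfl | hx
  · exact h.mem_right
  · rcases hx with rfl | hx
    · exact hc
    · simp at hx

lemma conn_of_mem_support {S : Set V} {a b x : V} (w : G.Walk a b)
    (hw : ∀ y ∈ w.support, y ∈ S) (hx : x ∈ w.support) : Conn G S a x := by
  classical
  refine ⟨w.takeUntil x hx, ?_⟩
  intro y hy
  exact hw y (w.support_takeUntil_subset hx hy)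


lemma conn_of_induce_walk {S : Set V} {x y : ↥S} (w : (G.induce S).Walk x y) :
    Conn G S x.val y.val := by
  let hom : G.induce S →g G := ⟨Subtype.val, fun {a b} h => h⟩
  refine ⟨w.map hom, ?_⟩
  intro z hz
  rw [Walk.support_map] at hz
  obtain ⟨z', _, rfl⟩ := List.mem_map.mp hz
  exact z'.2

lemma conn_of_connected {S : Set V} {a b : V} (h : (G.induce S).Connected)
    (ha : a ∈ S) (hb : b ∈ S) : Conn G S a b := by
  obtain ⟨w⟩ := h.preconnected ⟨a, ha⟩ ⟨b, hb⟩
  exact conn_of_induce_walk w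


lemma exists_odd_closed_walk (hnb : ¬ G.Colorable 2) :
    ∃ (u : V) (w : G.Walk u u), Odd w.length := by
  classical
  by_contra hno
  push_neg at hno
  apply hnb
  have hre : ∀ v : V, G.Reachable (G.connectedComponentMk v).out v := by
    intro v
    exact ConnectedComponent.exact (Quot.out_eq _)
  have hkey : ∀ a b : V, G.Adj a b →
      (∃ w : G.Walk (G.connectedComponentMk a).out a, Odd w.length) →
      (∃ w : G.Walk (G.connectedComponentMk b).out b, Odd w.length) → False := by
    intro a b hadj ⟨wa, hwa⟩ ⟨wb, hwb⟩
    have hcomp : (G.connectedComponentMk b).out = (G.connectedComponentMk a).out :=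
      congrArg Quot.out (ConnectedComponent.sound hadj.reachable).symm
    apply hno _ ((wa.append (Walk.cons hadj Walk.nil)).append (wb.copy hcomp rfl).reverse)
    rw [Walk.length_append, Walk.length_append, Walk.length_reverse, Walk.length_copy]
    simp only [Walk.length_cons, Walk.length_nil]
    rcases hwa with ⟨m, hm⟩; rcases hwb with ⟨m', hm'⟩
    exact ⟨m + m' + 1, by omega⟩
  have hkey2 : ∀ a b : V, G.Adj a b →
      ¬(∃ w : G.Walk (G.connectedComponentMk a).out a, Odd w.length) →
      ¬(∃ w : G.Walk (G.connectedComponentMk b).out b, Odd w.length) → False := by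
    intro a b hadj hA hB
    obtain ⟨wa⟩ := hre a
    obtain ⟨wb⟩ := hre b
    have hcomp : (G.connectedComponentMk b).out = (G.connectedComponentMk a).out :=
      congrArg Quot.out (ConnectedComponent.sound hadj.reachable).symm
    apply hno _ ((wa.append (Walk.cons hadj Walk.nil)).append (wb.copy hcomp rfl).reverse)
    rw [Walk.length_append, Walk.length_append, Walk.length_reverse, Walk.length_copy]
    simp only [Walk.length_cons, Walk.length_nil]
    have hea : Even wa.length := Nat.not_odd_iff_even.mp (fun hc => hA ⟨wa, hc⟩)
    have heb : Even wb.length := Nat.not_odd_iff_even.mp (fun hc => hB ⟨wb, hc⟩)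
    rcases hea with ⟨m, hm⟩; rcases heb with ⟨m', hm'⟩
    exact ⟨m + m', by omega⟩
  refine ⟨Coloring.mk
    (fun v => if ∃ w : G.Walk (G.connectedComponentMk v).out v, Odd w.length then (0 : Fin 2)
      else 1) ?_⟩
  intro a b hadj
  by_cases hA : ∃ w : G.Walk (G.connectedComponentMk a).out a, Odd w.length
  · have hB : ¬ ∃ w : G.Walk (G.connectedComponentMk b).out b, Odd w.length :=
      fun hB => hkey a b hadj hA hB
    simp only [if_pos hA, if_neg hB]
    decide
  · have hB : ∃ w : G.Walk (G.connectedComponentMk b).out b, Odd w.length := by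
      by_contra hB
      exact hkey2 a b hadj hA hB
    simp only [if_neg hA, if_pos hB]
    decide

lemma toInduce {T : Set V} :
    ∀ {a b : V} (w : G.Walk a b) (_ : ∀ x ∈ w.support, x ∈ T) (ha : a ∈ T) (hb : b ∈ T),
    ∃ w' : (G.induce T).Walk ⟨a, ha⟩ ⟨b, hb⟩, w'.length = w.length := by
  intro a b w
  induction w with
  | nil =>
      intro h ha hb
      exact ⟨Walk.nil, rfl⟩
  | @cons u v c hadj p ih =>
      intro h ha hb
      have hv : v ∈ T := h v (by simp)
      obtain ⟨p', hp'⟩ := ih (fun x hx => h x (by simp [hx])) hv hb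
      exact ⟨Walk.cons (show (G.induce T).Adj ⟨u, ha⟩ ⟨v, hv⟩ from hadj) p', by simp [hp']⟩

lemma reachable_induce_of_conn {S : Set V} {a b : V} (h : Conn G S a b)
    (ha : a ∈ S) (hb : b ∈ S) :
    (G.induce S).Reachable ⟨a, ha⟩ ⟨b, hb⟩ := by
  obtain ⟨w, hw⟩ := h
  obtain ⟨w', _⟩ := toInduce w hw ha hb
  exact ⟨w'⟩

lemma connected_of_conn {S : Set V} (hne : S.Nonempty)
    (h : ∀ a ∈ S, ∀ b ∈ S, Conn G S a b) : (G.induce S).Connected := by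
  rw [connected_iff]
  refine ⟨?_, ⟨⟨hne.choose, hne.choose_spec⟩⟩⟩
  rintro ⟨a, ha⟩ ⟨b, hb⟩
  exact reachable_induce_of_conn (h a ha b hb) ha hb

lemma good_lift {T : Set V} {u : ↥T} (c : (G.induce T).Walk u u) (hg : Good c) :
    ∃ (v : V) (c' : G.Walk v v), Good c' ∧ ∀ x ∈ c'.support, x ∈ T := by
  let hom : G.induce T →g G := ⟨Subtype.val, fun {a b} h => h⟩
  refine ⟨u.val, c.map hom, ⟨hg.1.map Subtype.val_injective, ?_, ?_⟩, ?_⟩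
  · rw [Walk.length_map]; exact hg.2.1
  · intro a b ha hb hadj
    rw [Walk.support_map] at ha hb
    obtain ⟨a', ha', rfl⟩ := List.mem_map.mp ha
    obtain ⟨b', hb', rfl⟩ := List.mem_map.mp hb
    have hadj' : (G.induce T).Adj a' b' := hadj
    have := hg.2.2 a' b' ha' hb' hadj'
    rw [Walk.edges_map]
    have heq : s((hom a' : V), hom b') = Sym2.map hom s(a', b') := (Sym2.map_pair_eq _ _ _).symm
    rw [heq]
    exact List.mem_map_of_mem this
  · intro x hx
    rw [Walk.support_map] at hx
    obtain ⟨x', _, rfl⟩ := List.mem_map.mp hx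
    exact x'.2

lemma good_in_subset {T : Set V} {x : V} (hx : x ∈ T) (w : G.Walk x x)
    (hodd : Odd w.length) (hsupp : ∀ z ∈ w.support, z ∈ T) :
    ∃ (v : V) (c : G.Walk v v), Good c ∧ ∀ z ∈ c.support, z ∈ T := by
  obtain ⟨w', hlen⟩ := toInduce w hsupp hx hx
  obtain ⟨v', c', hg⟩ := core w'.length w' rfl (by rw [hlen]; exact hodd)
  exact good_lift c' hg

/-- The achievable component sizes for induced odd cycles. -/
def cycP (G : SimpleGraph V) (n : ℕ) : Prop :=
  ∃ (v : V) (c : G.Walk v v), Good c ∧ ∃ a : V, a ∉ c.support ∧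
    n = Set.ncard {b | Conn G {u | u ∉ c.support} a b}

lemma cyc_inj {v : V} {c : G.Walk v v} (hc : c.IsCycle) {i j : ℕ}
    (hi : i ≤ c.length) (hj : j ≤ c.length) (heq : c.getVert i = c.getVert j) :
    i = j ∨ (i = 0 ∧ j = c.length) ∨ (i = c.length ∧ j = 0) := by
  have hl3 := hc.three_le_length
  have hnd := hc.support_nodup
  have htail : c.support.tail = (List.range c.length).map (fun k => c.getVert (k + 1)) := by
    rw [support_eq_map_getVert, List.range_succ_eq_map, List.map_cons, List.tail_cons,
      List.map_map]
    rfl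
  rw [htail] at hnd
  have hinj := List.inj_on_of_nodup_map hnd
  rcases Nat.eq_zero_or_pos i with rfl | hi0
  · rcases Nat.eq_zero_or_pos j with rfl | hj0
    · left; rfl
    · by_cases hjl : j = c.length
      · right; left; exact ⟨rfl, hjl⟩
      · exfalso
        have h1 : c.getVert ((j - 1) + 1) = c.getVert ((c.length - 1) + 1) := by
          rw [show j - 1 + 1 = j by omega, show c.length - 1 + 1 = c.length by omega, ← heq,
            c.getVert_zero, c.getVert_length]
        have := hinj (List.mem_range.mpr (by omega)) (List.mem_range.mpr (by omega)) h1
        omega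
  · rcases Nat.eq_zero_or_pos j with rfl | hj0
    · by_cases hil : i = c.length
      · right; right; exact ⟨hil, rfl⟩
      · exfalso
        have h1 : c.getVert ((i - 1) + 1) = c.getVert ((c.length - 1) + 1) := by
          rw [show i - 1 + 1 = i by omega, show c.length - 1 + 1 = c.length by omega, heq,
            c.getVert_zero, c.getVert_length]
        have := hinj (List.mem_range.mpr (by omega)) (List.mem_range.mpr (by omega)) h1
        omega
    · have h1 : c.getVert ((i - 1) + 1) = c.getVert ((j - 1) + 1) := by
        rw [show i - 1 + 1 = i by omega, show j - 1 + 1 = j by omega]; exact heq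
      have := hinj (List.mem_range.mpr (by omega)) (List.mem_range.mpr (by omega)) h1
      left; omega

lemma conn_avoid [Fintype V] (h3 : KConnected G 3) (x y : V) {a b : V}
    (ha : a ≠ x) (ha' : a ≠ y) (hb : b ≠ x) (hb' : b ≠ y) : Conn G {x, y}ᶜ a b := by
  have hcard : ({x, y} : Set V).ncard < 3 := by
    have h1 : ({x, y} : Set V).ncard ≤ ({y} : Set V).ncard + 1 := Set.ncard_insert_le _ _
    have h2 : ({y} : Set V).ncard = 1 := Set.ncard_singleton _
    omega
  have hconn := h3.2 {x, y} (Set.toFinite _) hcard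
  exact conn_of_connected hconn (by simp [ha, ha']) (by simp [hb, hb'])

/-- The central improvement lemma: a better induced odd cycle contradicts maximality. -/
lemma improve [Fintype V] {M : ℕ} (hmax : ∀ k, M < k → ¬ cycP G k)
    {v : V} {c : G.Walk v v} (hgood : Good c) {a₀ : V} (ha₀ : a₀ ∉ c.support)
    (hM : M = Set.ncard {b | Conn G {u | u ∉ c.support} a₀ b})
    {b₁ : V} (hb₁ : ¬ Conn G {u | u ∉ c.support} a₀ b₁)
    {x y : V} (A : G.Walk x y) (W : G.Walk x y)
    (hodd : Odd (A.length + W.length))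
    (hA : ∀ z ∈ A.support, z ∈ c.support)
    (hW : ∀ z ∈ W.support, Conn G {u | u ∉ c.support} b₁ z ∨ z = x ∨ z = y)
    {t : V} (ht : t ∈ c.support)
    (htH : ∃ h', Conn G {u | u ∉ c.support} a₀ h' ∧ G.Adj t h')
    (htA : t ∉ A.support) : False := by
  classical
  set S : Set V := {u | u ∉ c.support} with hS
  set H : Set V := {b | Conn G S a₀ b} with hH
  set K : Set V := {b | Conn G S b₁ b} with hK
  have hHK : ∀ z, Conn G S b₁ z → z ∉ H := by
    intro z hz hzH
    exact hb₁ (hzH.trans hz.symm)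
  set T : Set V := {z | z ∈ A.support} ∪ K with hT
  have hxT : x ∈ T := Or.inl A.start_mem_support
  set Wc : G.Walk x x := A.append W.reverse with hWc
  have hWcodd : Odd Wc.length := by
    rw [hWc, Walk.length_append, Walk.length_reverse]; exact hodd
  have hWcsupp : ∀ z ∈ Wc.support, z ∈ T := by
    intro z hz
    rcases (Walk.mem_support_append_iff _ _).mp hz with h | h
    · exact Or.inl h
    · rw [Walk.support_reverse, List.mem_reverse] at h
      rcases hW z h with h' | h' | h'
      · exact Or.inr h'
      · subst h'; exact Or.inl A.start_mem_support
      · subst h'; exact Or.inl A.end_mem_support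
  obtain ⟨v₁, c₁, hgood₁, hsub⟩ := good_in_subset hxT Wc hWcodd hWcsupp
  set S₁ : Set V := {u | u ∉ c₁.support} with hS₁
  have hHS₁ : ∀ z ∈ H, z ∈ S₁ := by
    intro z hz
    intro hzc₁
    rcases hsub z hzc₁ with h | h
    · exact (hz.mem_right : z ∈ S) (hA z h)
    · exact hHK z h hz
  have hconn₁ : ∀ z ∈ H, Conn G S₁ a₀ z := by
    intro z hz
    obtain ⟨w, hw⟩ := hz
    exact ⟨w, fun u' hu' => hHS₁ u' (conn_of_mem_support w hw hu')⟩
  have htS₁ : t ∈ S₁ := by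
    intro htc₁
    rcases hsub t htc₁ with h | h
    · exact htA h
    · exact (h.mem_right : t ∈ S) ht
  obtain ⟨h', hh'H, hadj⟩ := htH
  have htH₁ : Conn G S₁ a₀ t := (hconn₁ h' hh'H).adj_extend hadj.symm htS₁
  have ha₀H : a₀ ∈ H := Conn.refl ha₀
  have ha₀c₁ : a₀ ∉ c₁.support := hHS₁ a₀ ha₀H
  have htnH : t ∉ H := fun hmem => (hmem.mem_right : t ∈ S) ht
  set H₁ : Set V := {b | Conn G S₁ a₀ b} with hH₁
  have hsub2 : insert t H ⊆ H₁ := by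
    intro z hz
    rcases Set.mem_insert_iff.mp hz with rfl | hz
    · exact htH₁
    · exact hconn₁ z hz
  have hog : M + 1 ≤ H₁.ncard := by
    calc M + 1 = (insert t H).ncard := by
              rw [hM, Set.ncard_insert_of_notMem htnH (Set.toFinite _)]
         _ ≤ H₁.ncard := Set.ncard_le_ncard hsub2 (Set.toFinite _)
  exact hmax H₁.ncard (by omega) ⟨v₁, c₁, hgood₁, a₀, ha₀c₁, rfl⟩

/-- Arc version of the improvement lemma: for attachments `f i`, `f j` of a component `K`
joined by a walk `W` through `K`, any neighbour index `t` of `H` must lie on the parity-matching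
arc. -/
lemma key [Fintype V] {M : ℕ} (hmax : ∀ k, M < k → ¬ cycP G k)
    {v : V} {c : G.Walk v v} (hgood : Good c) {a₀ : V} (ha₀ : a₀ ∉ c.support)
    (hM : M = Set.ncard {b | Conn G {u | u ∉ c.support} a₀ b})
    {b₁ : V} (hb₁ : ¬ Conn G {u | u ∉ c.support} a₀ b₁)
    {i j t : ℕ} (hij : i < j) (hjl : j < c.length) (htl : t < c.length)
    (W : G.Walk (c.getVert i) (c.getVert j))
    (hW : ∀ z ∈ W.support,
      Conn G {u | u ∉ c.support} b₁ z ∨ z = c.getVert i ∨ z = c.getVert j)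
    (htH : ∃ h', Conn G {u | u ∉ c.support} a₀ h' ∧ G.Adj (c.getVert t) h') :
    (Odd (W.length + (j - i)) → i ≤ t ∧ t ≤ j) ∧
    (Odd (W.length + (c.length - (j - i))) → t ≤ i ∨ j ≤ t) := by
  classical
  have hcyc := hgood.1
  have hl3 := hcyc.three_le_length
  have hgvmem : ∀ k : ℕ, c.getVert k ∈ c.support := by
    intro k
    rcases le_or_gt k c.length with h | h
    · exact mem_support_iff_getVert.mpr ⟨k, h, rfl⟩
    · rw [Walk.getVert_of_length_le c (by omega)]
      exact c.end_mem_support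
  constructor
  · -- inner arc
    intro hpar
    by_contra hcon
    have hcon' : t < i ∨ j < t := by omega
    have e1 : (dp c i).getVert (j - i) = c.getVert j := by
      rw [getVert_dp]; congr 1; omega
    set A : G.Walk (c.getVert i) (c.getVert j) := (tk (dp c i) (j - i)).copy rfl e1 with hA
    have hlenA : A.length = j - i := by
      rw [hA, Walk.length_copy, length_tk, length_dp]; omega
    have hAchar : ∀ z ∈ A.support, ∃ m, i ≤ m ∧ m ≤ j ∧ c.getVert m = z := by
      intro z hz
      obtain ⟨k, hk, hkz⟩ := mem_support_iff_getVert.mp hz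
      rw [hA, Walk.getVert_copy, getVert_tk, getVert_dp] at hkz
      exact ⟨i + min k (j - i), by omega, by omega, hkz⟩
    have hAsupp : ∀ z ∈ A.support, z ∈ c.support := by
      intro z hz
      obtain ⟨m, _, _, hm⟩ := hAchar z hz
      rw [← hm]; exact hgvmem m
    have htA : c.getVert t ∉ A.support := by
      intro hmem
      obtain ⟨m, hm1, hm2, hm⟩ := hAchar _ hmem
      rcases cyc_inj hcyc (by omega) (by omega) hm.symm with h | h | h <;> omega
    exact improve hmax hgood ha₀ hM hb₁ A W
      (by rw [hlenA, Nat.add_comm]; exact hpar) hAsupp hW (hgvmem t) htH htA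
  · -- outer arc
    intro hpar
    by_contra hcon
    have hcon' : i < t ∧ t < j := by omega
    set A : G.Walk (c.getVert j) (c.getVert i) := (dp c j).append (tk c i) with hA
    have hlenA : A.length = (c.length - j) + i := by
      rw [hA, Walk.length_append, length_tk, length_dp]; omega
    have hAchar : ∀ z ∈ A.support, ∃ m, (j ≤ m ∧ m ≤ c.length ∨ m ≤ i) ∧ c.getVert m = z := by
      intro z hz
      rcases (Walk.mem_support_append_iff _ _).mp hz with h | h
      · obtain ⟨k, hk, hkz⟩ := mem_support_iff_getVert.mp h
        rw [getVert_dp] at hkz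
        rw [length_dp] at hk
        exact ⟨j + k, Or.inl ⟨by omega, by omega⟩, hkz⟩
      · obtain ⟨k, hk, hkz⟩ := mem_support_iff_getVert.mp h
        rw [getVert_tk] at hkz
        exact ⟨min k i, Or.inr (by omega), hkz⟩
    have hAsupp : ∀ z ∈ A.support, z ∈ c.support := by
      intro z hz
      obtain ⟨m, _, hm⟩ := hAchar z hz
      rw [← hm]; exact hgvmem m
    have htA : c.getVert t ∉ A.support := by
      intro hmem
      obtain ⟨m, hm1, hm⟩ := hAchar _ hmem
      have hmle : m ≤ c.length := by omega
      rcases cyc_inj hcyc (by omega) hmle hm.symm with h | h | h <;> omega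
    have hWr : ∀ z ∈ W.reverse.support,
        Conn G {u | u ∉ c.support} b₁ z ∨ z = c.getVert j ∨ z = c.getVert i := by
      intro z hz
      rw [Walk.support_reverse, List.mem_reverse] at hz
      rcases hW z hz with h | h | h
      · exact Or.inl h
      · exact Or.inr (Or.inr h)
      · exact Or.inr (Or.inl h)
    exact improve hmax hgood ha₀ hM hb₁ A W.reverse
      (by rw [hlenA, Walk.length_reverse, Nat.add_comm];
          rw [show c.length - j + i = c.length - (j - i) by omega]; exact hpar)
      hAsupp hWr (hgvmem t) htH htA

/-- Neighbours of a "component" `{b | Conn G S r b}` lie on the cycle. -/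
lemma nbr_mem_support {v : V} {c : G.Walk v v} {r z : V}
    (hz : z ∉ {b | Conn G {u | u ∉ c.support} r b})
    (hz2 : ∃ k ∈ {b | Conn G {u | u ∉ c.support} r b}, G.Adj z k) :
    z ∈ c.support := by
  by_contra hzc
  obtain ⟨k, hk, hadj⟩ := hz2
  exact hz (hk.adj_extend hadj.symm hzc)

/-- Every component of the complement of the cycle has at least three attachments,
avoiding any two prescribed cycle vertices. -/
lemma three_nbrs [Fintype V] (h3 : KConnected G 3) {v : V} {c : G.Walk v v}
    {r out : V} (hr : r ∉ c.support) (hout : out ∉ c.support)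
    (hro : ¬ Conn G {u | u ∉ c.support} r out) (x y : V)
    (hx : x ∈ c.support) (hy : y ∈ c.support) :
    ∃ z, (z ∉ {b | Conn G {u | u ∉ c.support} r b} ∧
          ∃ k ∈ {b | Conn G {u | u ∉ c.support} r b}, G.Adj z k) ∧ z ≠ x ∧ z ≠ y := by
  classical
  by_contra hno
  push_neg at hno
  have hcw := conn_avoid h3 x y (a := r) (b := out)
    (fun h => hr (h ▸ hx)) (fun h => hr (h ▸ hy))
    (fun h => hout (h ▸ hx)) (fun h => hout (h ▸ hy))
  obtain ⟨w, hw⟩ := hcw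
  set K : Set V := {b | Conn G {u | u ∉ c.support} r b} with hK
  have hrK : r ∈ K := Conn.refl hr
  obtain ⟨d, hd, hdf, hds⟩ := w.exists_boundary_dart K hrK hro
  have hadj : G.Adj d.snd d.fst := d.adj.symm
  have hznbr : d.snd ∉ K ∧ ∃ k ∈ K, G.Adj d.snd k := ⟨hds, d.fst, hdf, hadj⟩
  have hmem : d.snd ∈ w.support := Walk.dart_snd_mem_support_of_mem_darts w hd
  have h2 := hw d.snd hmem
  simp only [Set.mem_compl_iff, Set.mem_insert_iff, Set.mem_singleton_iff] at h2
  have h3' := hno d.snd hznbr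
  tauto

lemma support_tail_eq {v : V} (c : G.Walk v v) :
    c.support.tail = (List.range c.length).map (fun k => c.getVert (k + 1)) := by
  rw [support_eq_map_getVert, List.range_succ_eq_map, List.map_cons, List.tail_cons,
    List.map_map]
  rfl

lemma exists_outside [Fintype V] (h3 : KConnected G 3) {v : V} {c : G.Walk v v}
    (hgood : Good c) : ∃ a, a ∉ c.support := by
  classical
  by_contra hall
  push_neg at hall
  have hcyc := hgood.1
  have hl3 := hcyc.three_le_length
  have hmod := Nat.odd_iff.mp hgood.2.1
  rcases lt_or_ge c.length 5 with h5 | h5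
  · have hsub : (Set.univ : Set V) ⊆ {x | x ∈ c.support.tail} := by
      intro a _
      obtain ⟨k, hk, hka⟩ := mem_support_iff_getVert.mp (hall a)
      rw [support_tail_eq]
      rcases Nat.eq_zero_or_pos k with rfl | hk0
      · have : c.getVert ((c.length - 1) + 1) = a := by
          rw [show c.length - 1 + 1 = c.length by omega, c.getVert_length, ← c.getVert_zero]
          exact hka
        simp only [Set.mem_setOf_eq, List.mem_map]
        exact ⟨c.length - 1, List.mem_range.mpr (by omega), this⟩
      · simp only [Set.mem_setOf_eq, List.mem_map]
        exact ⟨k - 1, List.mem_range.mpr (by omega), by rw [show k - 1 + 1 = k by omega]; exact hka⟩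
    have hle : (Set.univ : Set V).ncard ≤ c.length := by
      calc (Set.univ : Set V).ncard ≤ {x | x ∈ c.support.tail}.ncard :=
            Set.ncard_le_ncard hsub (Set.toFinite _)
        _ = (c.support.tail.toFinset : Set V).ncard := by rw [List.coe_toFinset]
        _ = c.support.tail.toFinset.card := Set.ncard_coe_finset _
        _ ≤ c.support.tail.length := List.toFinset_card_le _
        _ = c.length := by rw [List.length_tail, Walk.length_support]; omega
    rw [Set.ncard_univ] at hle
    have := h3.1
    omega
  · set f := c.getVert with hf
    have hne : ∀ (i j : ℕ), i < j → j ≤ 4 → f i ≠ f j := by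
      intro i j hij hj4 heq
      rcases cyc_inj hcyc (by omega) (by omega) heq with h | h | h <;> omega
    obtain ⟨w, hw⟩ := conn_avoid h3 (f 0) (f 2) (a := f 1) (b := f 3)
      (hne 0 1 (by omega) (by omega)).symm (hne 1 2 (by omega) (by omega))
      (hne 0 3 (by omega) (by omega)).symm (hne 2 3 (by omega) (by omega)).symm
    have hwlen : 0 < w.length := by
      by_contra h0
      exact hne 1 3 (by omega) (by omega) (Walk.eq_of_length_eq_zero (p := w) (by omega))
    have hadj : G.Adj (f 1) (w.getVert 1) := by
      have := w.adj_getVert_succ hwlen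
      rwa [w.getVert_zero] at this
    have hbmem : w.getVert 1 ∈ w.support := mem_support_iff_getVert.mpr ⟨1, by omega, rfl⟩
    have hb := hw _ hbmem
    simp only [Set.mem_compl_iff, Set.mem_insert_iff, Set.mem_singleton_iff, not_or] at hb
    have hedge := hgood.2.2 (f 1) (w.getVert 1)
      (mem_support_iff_getVert.mpr ⟨1, by omega, rfl⟩) (hall _) hadj
    obtain ⟨i0, hi0, heq⟩ := exists_idx_of_edge_mem hedge
    rw [Sym2.eq_iff] at heq
    rcases heq with ⟨h1, h2⟩ | ⟨h1, h2⟩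
    · rcases cyc_inj hcyc (show (1:ℕ) ≤ c.length by omega) (le_of_lt hi0) h1 with h | h | h
      · rw [← h] at h2; exact hb.2 h2
      · omega
      · omega
    · rcases cyc_inj hcyc (show (1:ℕ) ≤ c.length by omega) (by omega : i0 + 1 ≤ c.length) h1
        with h | h | h
      · have : i0 = 0 := by omega
        rw [this] at h2
        exact hb.1 h2
      · omega
      · omega

lemma sort3 {P : ℕ → Prop} {a b c' : ℕ} (ha : P a) (hb : P b) (hc : P c')
    (hab : a ≠ b) (hac : a ≠ c') (hbc : b ≠ c') :
    ∃ i j k, i < j ∧ j < k ∧ P i ∧ P j ∧ P k := by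
  rcases lt_or_gt_of_ne hab with h1 | h1
  · rcases lt_or_gt_of_ne hbc with h2 | h2
    · exact ⟨a, b, c', h1, h2, ha, hb, hc⟩
    · rcases lt_or_gt_of_ne hac with h3 | h3
      · exact ⟨a, c', b, h3, h2, ha, hc, hb⟩
      · exact ⟨c', a, b, h3, h1, hc, ha, hb⟩
  · rcases lt_or_gt_of_ne hac with h3 | h3
    · exact ⟨b, a, c', h1, h3, hb, ha, hc⟩
    · rcases lt_or_gt_of_ne hbc with h2 | h2
      · exact ⟨b, c', a, h2, h3, hb, hc, ha⟩
      · exact ⟨c', b, a, h2, h1, hc, hb, ha⟩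

end NSOC

open NSOC in
/-- Bondy–Vince: every 3-connected nonbipartite graph contains a non-separating
induced odd cycle. -/
theorem nonseparating_induced_odd_cycle {V : Type*} [Fintype V] (G : SimpleGraph V)
    (h3 : KConnected G 3) (hnb : ¬ G.Colorable 2) :
    ∃ (v : V) (c : G.Walk v v), c.IsCycle ∧ Odd c.length ∧
      (∀ a b : V, a ∈ c.support → b ∈ c.support → G.Adj a b → s(a, b) ∈ c.edges) ∧
      (G.induce {u | u ∉ c.support}).Connected := by
  classical
  obtain ⟨u0, w0, hw0⟩ := NSOC.exists_odd_closed_walk hnb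
  obtain ⟨v0, c0, hg0⟩ := NSOC.core w0.length w0 rfl hw0
  obtain ⟨a0', ha0'⟩ := NSOC.exists_outside h3 hg0
  have hPbound : ∀ k, NSOC.cycP G k → k ≤ Nat.card V := by
    rintro k ⟨v, c, hg, a, ha, rfl⟩
    calc Set.ncard _ ≤ (Set.univ : Set V).ncard :=
          Set.ncard_le_ncard (Set.subset_univ _) (Set.toFinite _)
      _ = Nat.card V := Set.ncard_univ V
  have hP0 : NSOC.cycP G (Set.ncard {b | NSOC.Conn G {u | u ∉ c0.support} a0' b}) :=
    ⟨v0, c0, hg0, a0', ha0', rfl⟩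
  set M := Nat.findGreatest (NSOC.cycP G) (Nat.card V) with hMdef
  have hPM : NSOC.cycP G M := Nat.findGreatest_spec (hPbound _ hP0) hP0
  have hmax : ∀ k, M < k → ¬ NSOC.cycP G k := by
    intro k hk hc
    exact Nat.findGreatest_is_greatest hk (hPbound k hc) hc
  obtain ⟨v, c, hgood, a₀, ha₀, hM⟩ := hPM
  by_cases hHS : ∀ b, b ∉ c.support → NSOC.Conn G {u | u ∉ c.support} a₀ b
  · refine ⟨v, c, hgood.1, hgood.2.1, hgood.2.2, ?_⟩
    exact NSOC.connected_of_conn ⟨a₀, ha₀⟩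
      (fun a ha b hb => ((hHS a ha).symm.trans (hHS b hb)))
  · exfalso
    push_neg at hHS
    obtain ⟨b₁, hb₁S, hb₁⟩ := hHS
    have hcyc := hgood.1
    have hl3 := hcyc.three_le_length
    have hmod := Nat.odd_iff.mp hgood.2.1
    set S : Set V := {u | u ∉ c.support} with hSdef
    set NB : V → Set V := fun b₂ =>
      {z | z ∉ {b | NSOC.Conn G S b₂ b} ∧ ∃ k ∈ {b | NSOC.Conn G S b₂ b}, G.Adj z k} with hNBdef
    have hb₁a₀ : ¬ NSOC.Conn G S b₁ a₀ := fun h => hb₁ h.symm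
    have hgvmem : ∀ k : ℕ, c.getVert k ∈ c.support := by
      intro k
      rcases le_or_gt k c.length with h | h
      · exact mem_support_iff_getVert.mpr ⟨k, h, rfl⟩
      · rw [Walk.getVert_of_length_le c (by omega)]
        exact c.end_mem_support
    have hidx : ∀ z ∈ c.support, ∃ r, r < c.length ∧ c.getVert r = z := by
      intro z hz
      obtain ⟨k, hk, hkz⟩ := mem_support_iff_getVert.mp hz
      rcases Nat.lt_or_ge k c.length with h | h
      · exact ⟨k, h, hkz⟩
      · refine ⟨0, by omega, ?_⟩
        rw [c.getVert_zero, ← c.getVert_length]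
        rw [show k = c.length by omega] at hkz
        exact hkz
    have hnbr_sup : ∀ (b₂ : V), b₂ ∉ c.support → ∀ z ∈ NB b₂, z ∈ c.support := by
      intro b₂ hb₂ z hz
      exact NSOC.nbr_mem_support hz.1 hz.2
    -- three distinct attachment indices for the component of a root r with an outside vertex
    have h3idx : ∀ (r out : V), r ∉ c.support → out ∉ c.support →
        ¬ NSOC.Conn G S r out →
        ∃ i₁ i₂ i₃ : ℕ, i₁ < c.length ∧ i₂ < c.length ∧ i₃ < c.length ∧
          i₁ ≠ i₂ ∧ i₁ ≠ i₃ ∧ i₂ ≠ i₃ ∧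
          c.getVert i₁ ∈ NB r ∧ c.getVert i₂ ∈ NB r ∧ c.getVert i₃ ∈ NB r := by
      intro r out hr hout hro
      obtain ⟨z₁, hz₁, _, _⟩ := NSOC.three_nbrs h3 hr hout hro v v
        c.start_mem_support c.start_mem_support
      have hz₁m : z₁ ∈ c.support := NSOC.nbr_mem_support hz₁.1 hz₁.2
      obtain ⟨z₂, hz₂, hz₂1, _⟩ := NSOC.three_nbrs h3 hr hout hro z₁ z₁ hz₁m hz₁m
      have hz₂m : z₂ ∈ c.support := NSOC.nbr_mem_support hz₂.1 hz₂.2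
      obtain ⟨z₃, hz₃, hz₃1, hz₃2⟩ := NSOC.three_nbrs h3 hr hout hro z₁ z₂ hz₁m hz₂m
      obtain ⟨i₁, hi₁, hiz₁⟩ := hidx z₁ hz₁m
      obtain ⟨i₂, hi₂, hiz₂⟩ := hidx z₂ hz₂m
      obtain ⟨i₃, hi₃, hiz₃⟩ := hidx z₃ (NSOC.nbr_mem_support hz₃.1 hz₃.2)
      refine ⟨i₁, i₂, i₃, hi₁, hi₂, hi₃, ?_, ?_, ?_, ?_, ?_, ?_⟩
      · intro h; exact hz₂1 (by rw [← hiz₂, ← h, hiz₁])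
      · intro h; exact hz₃1 (by rw [← hiz₃, ← h, hiz₁])
      · intro h; exact hz₃2 (by rw [← hiz₃, ← h, hiz₂])
      · rw [hiz₁]; exact hz₁
      · rw [hiz₂]; exact hz₂
      · rw [hiz₃]; exact hz₃
    -- anchored walks
    have anchor : ∀ (b₂ : V), ∀ i : ℕ, c.getVert i ∈ NB b₂ →
        ∃ P : G.Walk (c.getVert i) b₂,
          ∀ z ∈ P.support, NSOC.Conn G S b₂ z ∨ z = c.getVert i := by
      intro b₂ i hmem
      obtain ⟨hni, k, hk, hadj⟩ := hmem
      obtain ⟨w, hwsup⟩ := hk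
      refine ⟨Walk.cons hadj w.reverse, ?_⟩
      intro z hz
      rw [Walk.support_cons] at hz
      rcases List.mem_cons.mp hz with rfl | hz
      · exact Or.inr rfl
      · rw [Walk.support_reverse, List.mem_reverse] at hz
        exact Or.inl (NSOC.conn_of_mem_support w hwsup hz)
    -- pair walks through the component of b₂
    have pairW : ∀ (b₂ : V) (i j : ℕ) (Pi : G.Walk (c.getVert i) b₂)
        (_ : ∀ z ∈ Pi.support, NSOC.Conn G S b₂ z ∨ z = c.getVert i)
        (Pj : G.Walk (c.getVert j) b₂)
        (_ : ∀ z ∈ Pj.support, NSOC.Conn G S b₂ z ∨ z = c.getVert j),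
        ∀ z ∈ (Pi.append Pj.reverse).support,
          NSOC.Conn G S b₂ z ∨ z = c.getVert i ∨ z = c.getVert j := by
      intro b₂ i j Pi hPi Pj hPj z hz
      rcases (Walk.mem_support_append_iff _ _).mp hz with h | h
      · rcases hPi z h with h' | h'
        · exact Or.inl h'
        · exact Or.inr (Or.inl h')
      · rw [Walk.support_reverse, List.mem_reverse] at h
        rcases hPj z h with h' | h'
        · exact Or.inl h'
        · exact Or.inr (Or.inr h')
    have hHnbr : ∀ t : ℕ, c.getVert t ∈ NB a₀ →
        ∃ h', NSOC.Conn G S a₀ h' ∧ G.Adj (c.getVert t) h' := by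
      intro t ht
      obtain ⟨_, h', hh', hadj⟩ := ht
      exact ⟨h', hh', hadj⟩
    by_cases hdeg : ∀ i, i < c.length → c.getVert i ∈ NB b₁ → c.getVert i ∈ NB a₀
    · -- degenerate case: parity contradiction
      obtain ⟨s₁, s₂, s₃, hs₁, hs₂, hs₃, h12, h13, h23, hN₁, hN₂, hN₃⟩ :=
        h3idx b₁ a₀ hb₁S ha₀ hb₁a₀
      obtain ⟨i, j, k, hij, hjk, hPi', hPj', hPk'⟩ :=
        NSOC.sort3 (P := fun r => r < c.length ∧ c.getVert r ∈ NB b₁)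
          ⟨hs₁, hN₁⟩ ⟨hs₂, hN₂⟩ ⟨hs₃, hN₃⟩ h12 h13 h23
      obtain ⟨hil, hiN⟩ := hPi'
      obtain ⟨hjl, hjN⟩ := hPj'
      obtain ⟨hkl, hkN⟩ := hPk'
      obtain ⟨Pi, hPi⟩ := anchor b₁ i hiN
      obtain ⟨Pj, hPj⟩ := anchor b₁ j hjN
      obtain ⟨Pk, hPk⟩ := anchor b₁ k hkN
      have e1 : ¬ Odd ((Pi.append Pj.reverse).length + (j - i)) := by
        intro ho
        have := (NSOC.key hmax hgood ha₀ hM hb₁ hij hjl hkl (Pi.append Pj.reverse)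
          (pairW b₁ i j Pi hPi Pj hPj) (hHnbr k (hdeg k hkl hkN))).1 ho
        omega
      have e2 : ¬ Odd ((Pj.append Pk.reverse).length + (k - j)) := by
        intro ho
        have := (NSOC.key hmax hgood ha₀ hM hb₁ hjk hkl hil (Pj.append Pk.reverse)
          (pairW b₁ j k Pj hPj Pk hPk) (hHnbr i (hdeg i hil hiN))).1 ho
        omega
      have e3 : ¬ Odd ((Pi.append Pk.reverse).length + (c.length - (k - i))) := by
        intro ho
        have := (NSOC.key hmax hgood ha₀ hM hb₁ (by omega : i < k) hkl hjl
          (Pi.append Pk.reverse)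
          (pairW b₁ i k Pi hPi Pk hPk) (hHnbr j (hdeg j hjl hjN))).2 ho
        omega
      rw [Walk.length_append, Walk.length_reverse] at e1 e2 e3
      rw [Nat.not_odd_iff_even, Nat.even_iff] at e1 e2 e3
      omega
    · -- non-degenerate case
      push_neg at hdeg
      obtain ⟨s, hsl, hsNK, hsNH⟩ := hdeg
      -- three distinct attachment indices of H
      obtain ⟨t₁, t₂, t₃, ht₁, ht₂, ht₃, ht12, ht13, ht23, htN₁, htN₂, htN₃⟩ :=
        h3idx a₀ b₁ ha₀ hb₁S hb₁
      -- gap construction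
      obtain ⟨p, q, hpl, hql, hpNH, hqNH, hgap, hnoIH⟩ :
          ∃ p q : ℕ, p < c.length ∧ q < c.length ∧
            c.getVert p ∈ NB a₀ ∧ c.getVert q ∈ NB a₀ ∧
            ((p < q ∧ p < s ∧ s < q) ∨ (q < p ∧ (p < s ∨ s < q))) ∧
            (∀ t, t < c.length → c.getVert t ∈ NB a₀ →
              ¬((p < q ∧ p < t ∧ t < q) ∨ (q < p ∧ (p < t ∨ t < q)))) := by
        set IH : Finset ℕ := (Finset.range c.length).filter
          (fun t => c.getVert t ∈ NB a₀) with hIHdef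
        have hIHmem : ∀ t, t < c.length → c.getVert t ∈ NB a₀ → t ∈ IH := by
          intro t h1 h2
          rw [hIHdef, Finset.mem_filter]
          exact ⟨Finset.mem_range.mpr h1, h2⟩
        have hIHprop : ∀ t ∈ IH, t < c.length ∧ c.getVert t ∈ NB a₀ := by
          intro t ht
          rw [hIHdef, Finset.mem_filter, Finset.mem_range] at ht
          exact ht
        have hmem1 : t₁ ∈ IH := hIHmem _ ht₁ htN₁
        have hmem2 : t₂ ∈ IH := hIHmem _ ht₂ htN₂
        have hsmem : s ∉ IH := fun hmem => hsNH (hIHprop s hmem).2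
        set T1 := IH.filter (fun t => t < s) with hT1def
        set T2 := IH.filter (fun t => s < t) with hT2def
        have hsplit : ∀ t ∈ IH, t ∈ T1 ∨ t ∈ T2 := by
          intro t ht
          rcases lt_trichotomy t s with h | h | h
          · exact Or.inl (Finset.mem_filter.mpr ⟨ht, h⟩)
          · exact absurd (h ▸ ht) hsmem
          · exact Or.inr (Finset.mem_filter.mpr ⟨ht, h⟩)
        have hT1p : ∀ t ∈ T1, t ∈ IH ∧ t < s := by
          intro t ht; rw [hT1def, Finset.mem_filter] at ht; exact ht
        have hT2p : ∀ t ∈ T2, t ∈ IH ∧ s < t := by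
          intro t ht; rw [hT2def, Finset.mem_filter] at ht; exact ht
        by_cases h1 : T1.Nonempty
        · by_cases h2 : T2.Nonempty
          · -- linear gap
            set p := T1.max' h1 with hpdef
            set q := T2.min' h2 with hqdef
            have hpT1 := hT1p p (T1.max'_mem h1)
            have hqT2 := hT2p q (T2.min'_mem h2)
            have hpIH := hIHprop p hpT1.1
            have hqIH := hIHprop q hqT2.1
            refine ⟨p, q, hpIH.1, hqIH.1, hpIH.2, hqIH.2,
              Or.inl ⟨by omega, hpT1.2, hqT2.2⟩, ?_⟩
            intro t htl htN hint
            have htIH := hIHmem t htl htN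
            rcases hint with ⟨_, hpt, htq⟩ | ⟨hqp, _⟩
            · rcases hsplit t htIH with h | h
              · have := T1.le_max' t h; omega
              · have := T2.min'_le t h; omega
            · omega
          · -- wrap gap, s above everything
            have hT2e : ∀ t ∈ IH, t < s := by
              intro t ht
              rcases hsplit t ht with h | h
              · exact (hT1p t h).2
              · exact absurd ⟨t, h⟩ h2
            have hne : IH.Nonempty := ⟨t₁, hmem1⟩
            set p := IH.max' hne with hpdef
            set q := IH.min' hne with hqdef
            have hpIH := hIHprop p (IH.max'_mem hne)
            have hqIH := hIHprop q (IH.min'_mem hne)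
            have hqp : q < p := by
              have hle : q ≤ p := IH.min'_le p (IH.max'_mem hne)
              rcases Nat.eq_or_lt_of_le hle with he | h
              · exfalso
                have e1 : t₁ = p := le_antisymm (IH.le_max' t₁ hmem1)
                  (he ▸ IH.min'_le t₁ hmem1)
                have e2 : t₂ = p := le_antisymm (IH.le_max' t₂ hmem2)
                  (he ▸ IH.min'_le t₂ hmem2)
                exact ht12 (e1.trans e2.symm)
              · exact h
            refine ⟨p, q, hpIH.1, hqIH.1, hpIH.2, hqIH.2,
              Or.inr ⟨hqp, Or.inl (hT2e p (IH.max'_mem hne))⟩, ?_⟩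
            intro t htl htN hint
            have htIH := hIHmem t htl htN
            rcases hint with ⟨hpq, _⟩ | ⟨_, h | h⟩
            · omega
            · have := IH.le_max' t htIH; omega
            · have := IH.min'_le t htIH; omega
        · -- wrap gap, s below everything
          have h2 : T2.Nonempty := by
            rcases hsplit t₁ hmem1 with h | h
            · exact absurd ⟨t₁, h⟩ h1
            · exact ⟨t₁, h⟩
          have hT1e : ∀ t ∈ IH, s < t := by
            intro t ht
            rcases hsplit t ht with h | h
            · exact absurd ⟨t, h⟩ h1
            · exact (hT2p t h).2
          have hne : IH.Nonempty := ⟨t₁, hmem1⟩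
          set p := IH.max' hne with hpdef
          set q := IH.min' hne with hqdef
          have hpIH := hIHprop p (IH.max'_mem hne)
          have hqIH := hIHprop q (IH.min'_mem hne)
          have hqp : q < p := by
            have hle : q ≤ p := IH.min'_le p (IH.max'_mem hne)
            rcases Nat.eq_or_lt_of_le hle with he | h
            · exfalso
              have e1 : t₁ = p := le_antisymm (IH.le_max' t₁ hmem1)
                (he ▸ IH.min'_le t₁ hmem1)
              have e2 : t₂ = p := le_antisymm (IH.le_max' t₂ hmem2)
                (he ▸ IH.min'_le t₂ hmem2)
              exact ht12 (e1.trans e2.symm)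
            · exact h
          refine ⟨p, q, hpIH.1, hqIH.1, hpIH.2, hqIH.2,
            Or.inr ⟨hqp, Or.inr (hT1e q (IH.min'_mem hne))⟩, ?_⟩
          intro t htl htN hint
          have htIH := hIHmem t htl htN
          rcases hint with ⟨hpq, _⟩ | ⟨_, h | h⟩
          · omega
          · have := IH.le_max' t htIH; omega
          · have := IH.min'_le t htIH; omega
      -- Claim A: any component attached strictly inside the gap is confined to the closed gap
      have claimA : ∀ b₂ : V, ¬ NSOC.Conn G S a₀ b₂ →
          ∀ s₂, s₂ < c.length →
          ((p < q ∧ p < s₂ ∧ s₂ < q) ∨ (q < p ∧ (p < s₂ ∨ s₂ < q))) →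
          c.getVert s₂ ∈ NB b₂ → ∀ r, r < c.length → c.getVert r ∈ NB b₂ →
          ((p < q ∧ p ≤ r ∧ r ≤ q) ∨ (q < p ∧ (p ≤ r ∨ r ≤ q))) := by
        intro b₂ hb₂H s₂ hs₂l hs₂Int hs₂N r hrl hrN
        by_cases hrs : r = s₂
        · subst hrs; omega
        · obtain ⟨i, j, hij, hjl', hcase⟩ : ∃ i j, i < j ∧ j < c.length ∧
              ((i = s₂ ∧ j = r) ∨ (i = r ∧ j = s₂)) := by
            rcases lt_or_gt_of_ne hrs with h | h
            · exact ⟨r, s₂, h, hs₂l, Or.inr ⟨rfl, rfl⟩⟩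
            · exact ⟨s₂, r, h, hrl, Or.inl ⟨rfl, rfl⟩⟩
          have hiN : c.getVert i ∈ NB b₂ := by
            rcases hcase with ⟨h1, _⟩ | ⟨h1, _⟩ <;> subst h1 <;> assumption
          have hjN : c.getVert j ∈ NB b₂ := by
            rcases hcase with ⟨_, h2⟩ | ⟨_, h2⟩ <;> subst h2 <;> assumption
          obtain ⟨Pi, hPi⟩ := anchor b₂ i hiN
          obtain ⟨Pj, hPj⟩ := anchor b₂ j hjN
          have hkeyp := NSOC.key hmax hgood ha₀ hM hb₂H hij hjl' hpl
            (Pi.append Pj.reverse) (pairW b₂ i j Pi hPi Pj hPj) (hHnbr p hpNH)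
          have hkeyq := NSOC.key hmax hgood ha₀ hM hb₂H hij hjl' hql
            (Pi.append Pj.reverse) (pairW b₂ i j Pi hPi Pj hPj) (hHnbr q hqNH)
          have hpar : Odd ((Pi.append Pj.reverse).length + (j - i)) ∨
              Odd ((Pi.append Pj.reverse).length + (c.length - (j - i))) := by
            rw [Nat.odd_iff, Nat.odd_iff]; omega
          rcases hpar with hp1 | hp2
          · have c1 := hkeyp.1 hp1
            have c2 := hkeyq.1 hp1
            omega
          · have c1 := hkeyp.2 hp2
            have c2 := hkeyq.2 hp2
            omega
      have hKcl := claimA b₁ hb₁ s hsl hgap hsNK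
      -- the two-cut contradiction
      set Z : Set V := {z | (∃ r, r < c.length ∧
          ((p < q ∧ p < r ∧ r < q) ∨ (q < p ∧ (p < r ∨ r < q))) ∧ z = c.getVert r) ∨
          (z ∉ c.support ∧ ∀ r, r < c.length → c.getVert r ∈ NB z →
            ((p < q ∧ p ≤ r ∧ r ≤ q) ∨ (q < p ∧ (p ≤ r ∨ r ≤ q))))} with hZdef
      have hb₁Z : b₁ ∈ Z := Or.inr ⟨hb₁S, hKcl⟩
      have ha₀Z : a₀ ∉ Z := by
        intro hmem
        rcases hmem with ⟨r, hr, _, heqa⟩ | ⟨_, hcl⟩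
        · exact ha₀ (heqa ▸ hgvmem r)
        · obtain ⟨t, htl, htN, htp, htq⟩ : ∃ t, t < c.length ∧ c.getVert t ∈ NB a₀ ∧
              t ≠ p ∧ t ≠ q := by
            by_cases e1 : t₁ ≠ p ∧ t₁ ≠ q
            · exact ⟨t₁, ht₁, htN₁, e1.1, e1.2⟩
            · by_cases e2 : t₂ ≠ p ∧ t₂ ≠ q
              · exact ⟨t₂, ht₂, htN₂, e2.1, e2.2⟩
              · push_neg at e1 e2
                refine ⟨t₃, ht₃, htN₃, by omega, by omega⟩
          have hclt := hcl t htl htN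
          exact hnoIH t htl htN (by omega)
      obtain ⟨wcut, hwcut⟩ := NSOC.conn_avoid h3 (c.getVert p) (c.getVert q)
        (a := b₁) (b := a₀)
        (fun h => hb₁S (h ▸ hgvmem p)) (fun h => hb₁S (h ▸ hgvmem q))
        (fun h => ha₀ (h ▸ hgvmem p)) (fun h => ha₀ (h ▸ hgvmem q))
      obtain ⟨d, hd, hdf, hds⟩ := wcut.exists_boundary_dart Z hb₁Z ha₀Z
      have hdadj : G.Adj d.fst d.snd := d.adj
      have hdsnd_mem : d.snd ∈ wcut.support := Walk.dart_snd_mem_support_of_mem_darts wcut hd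
      have hdsnd := hwcut d.snd hdsnd_mem
      simp only [Set.mem_compl_iff, Set.mem_insert_iff, Set.mem_singleton_iff, not_or] at hdsnd
      apply hds
      rcases hdf with ⟨r, hrl, hIr, heq⟩ | ⟨hzS, hzcl⟩
      · -- the dart starts on the cycle, inside the gap
        by_cases hyS : d.snd ∈ c.support
        · -- chordless edge: consecutive indices
          obtain ⟨r', hr'l, hr'⟩ := hidx d.snd hyS
          have hr'p : r' ≠ p := fun h => hdsnd.1 (by rw [← hr', h])
          have hr'q : r' ≠ q := fun h => hdsnd.2 (by rw [← hr', h])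
          have hedge := hgood.2.2 d.fst d.snd (heq ▸ hgvmem r) hyS hdadj
          obtain ⟨i0, hi0, hei⟩ := exists_idx_of_edge_mem hedge
          rw [heq, ← hr'] at hei
          rw [Sym2.eq_iff] at hei
          have hrel : r' = r + 1 ∨ (r' = 0 ∧ r + 1 = c.length) ∨ (r' + 1 = r) ∨
              (r = 0 ∧ r' + 1 = c.length) := by
            rcases hei with ⟨h1, h2⟩ | ⟨h1, h2⟩
            · rcases NSOC.cyc_inj hcyc (by omega : r ≤ c.length)
                (le_of_lt hi0) h1 with h | h | h
              · subst h
                rcases NSOC.cyc_inj hcyc (by omega : r' ≤ c.length)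
                  (by omega : r + 1 ≤ c.length) h2 with h' | h' | h'
                · omega
                · omega
                · omega
              · omega
              · omega
            · rcases NSOC.cyc_inj hcyc (by omega : r ≤ c.length)
                (by omega : i0 + 1 ≤ c.length) h1 with h | h | h
              · have hi0r : i0 = r - 1 := by omega
                subst hi0r
                rcases NSOC.cyc_inj hcyc (by omega : r' ≤ c.length)
                  (by omega : r - 1 ≤ c.length) h2 with h' | h' | h'
                · omega
                · omega
                · omega
              · obtain ⟨hr0, hi0l⟩ := h
                have hi0e : i0 = c.length - 1 := by omega
                subst hi0e
                rcases NSOC.cyc_inj hcyc (by omega : r' ≤ c.length)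
                  (by omega : c.length - 1 ≤ c.length) h2 with h' | h' | h'
                · omega
                · omega
                · omega
              · omega
          exact Or.inl ⟨r', hr'l, by omega, hr'.symm⟩
        · -- a new component attached inside the gap
          have hfrN : ∀ w', ¬ NSOC.Conn G S w' (c.getVert r) := by
            intro w' hconn
            exact (hconn.mem_right : c.getVert r ∈ S) (hgvmem r)
          have hyH : ¬ NSOC.Conn G S a₀ d.snd := by
            intro hconn
            have hmemN : c.getVert r ∈ NB a₀ :=
              ⟨hfrN a₀, d.snd, hconn, heq ▸ hdadj⟩
            exact hnoIH r hrl hmemN (by omega)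
          have hattach : c.getVert r ∈ NB d.snd :=
            ⟨hfrN d.snd, d.snd, NSOC.Conn.refl hyS, heq ▸ hdadj⟩
          exact Or.inr ⟨hyS, claimA d.snd hyH r hrl hIr hattach⟩
      · -- the dart starts in a confined component
        by_cases hyS : d.snd ∈ c.support
        · obtain ⟨r', hr'l, hr'⟩ := hidx d.snd hyS
          have hr'p : r' ≠ p := fun h => hdsnd.1 (by rw [← hr', h])
          have hr'q : r' ≠ q := fun h => hdsnd.2 (by rw [← hr', h])
          have hfrN : ∀ w', ¬ NSOC.Conn G S w' (c.getVert r') := by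
            intro w' hconn
            exact (hconn.mem_right : c.getVert r' ∈ S) (hgvmem r')
          have hattach : c.getVert r' ∈ NB d.fst :=
            ⟨hfrN d.fst, d.fst, NSOC.Conn.refl hzS, hr' ▸ hdadj.symm⟩
          have hclr' := hzcl r' hr'l hattach
          exact Or.inl ⟨r', hr'l, by omega, hr'.symm⟩
        · -- same component as the dart's start
          have hconn_edge : NSOC.Conn G S d.fst d.snd := by
            refine ⟨Walk.cons hdadj Walk.nil, ?_⟩
            intro x hx
            simp only [Walk.support_cons, Walk.support_nil, List.mem_cons,
              List.mem_singleton] at hx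
            rcases hx with rfl | hx
            · exact hzS
            · rcases hx with rfl | hx
              · exact hyS
              · simp at hx
          refine Or.inr ⟨hyS, ?_⟩
          intro r'' hr''l hN
          obtain ⟨hnm, k, hk, hadjk⟩ := hN
          have hfrN : ¬ NSOC.Conn G S d.fst (c.getVert r'') := by
            intro hconn
            exact (hconn.mem_right : c.getVert r'' ∈ S) (hgvmem r'')
          exact hzcl r'' hr''l ⟨hfrN, k, hconn_edge.trans hk, hadjk⟩
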